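/- If f has a (k,ℓ)-debate, then f has a (k',ℓ)-debate with k' ≤ 2^ℓ. -/

import Mathlib

/-- A deterministic decision tree over `m` Boolean variables. -/
inductive DT (m : ℕ) : Type where
  | leaf : Bool → DT m
  | node : Fin m → DT m → DT m → DT m

/-- Evaluation of a decision tree on an input. -/
def DT.eval {m : ℕ} : DT m → (Fin m → Bool) → Bool
  | .leaf b, _ => b
  | .node i t0 t1, x => if x i then t1.eval x else t0.eval x

/-- Depth of a decision tree: maximum number of queries on a root-to-leaf path. -/
def DT.depth {m : ℕ} : DT m → ℕ
  | .leaf _ => 0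
  | .node _ t0 t1 => max t0.depth t1.depth + 1

/-- The set of variables queried anywhere in the tree. -/
def DT.vars {m : ℕ} : DT m → Finset (Fin m)
  | .leaf _ => ∅
  | .node i t0 t1 => insert i (t0.vars ∪ t1.vars)

/-- Number of internal (query) nodes of a decision tree. -/
def DT.numNodes {m : ℕ} : DT m → ℕ
  | .leaf _ => 0
  | .node _ t0 t1 => t0.numNodes + t1.numNodes + 1

/-- `f` depends on variable `i` if flipping bit `i` can change the value of `f`. -/
def DTDependsOn {m : ℕ} (f : (Fin m → Bool) → Bool) (i : Fin m) : Prop :=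
  ∃ x : Fin m → Bool, f x ≠ f (Function.update x i (!x i))

/-- The winning condition for Prover 1: `∀ α₁ ∃ β₁ … ∀ α_k ∃ β_k, V(α,β) = true`. -/
def AWins : ℕ → (List Bool → Bool) → Prop
  | 0, V => V [] = true
  | k + 1, V => ∀ a : Bool, ∃ b : Bool, AWins k (fun t => V (a :: b :: t))

/-- The winning condition for Prover 0: `∃ α₁ ∀ β₁ … ∃ α_k ∀ β_k, V(α,β) = false`. -/
def BWins : ℕ → (List Bool → Bool) → Prop
  | 0, V => V [] = false
  | k + 1, V => ∃ a : Bool, ∀ b : Bool, BWins k (fun t => V (a :: b :: t))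

/-- Assemble the input `x` together with the `2k` transcript bits
`α₁, β₁, …, α_k, β_k` into a single input of length `n + 2k`. -/
def assemble (n k : ℕ) (x : Fin n → Bool) (t : List Bool) : Fin (n + 2 * k) → Bool :=
  fun j => if h : (j : ℕ) < n then x ⟨j, h⟩ else t.getD ((j : ℕ) - n) false

/-- A `(k,ℓ)`-debate for `f`: a verifier given by a decision tree of depth at most `ℓ`
on the input bits and the `2k` transcript bits, satisfying the alternating-quantifier
winning conditions. -/
def IsDebate (n k ℓ : ℕ) (f : (Fin n → Bool) → Bool) : Prop :=
  ∃ T : DT (n + 2 * k), T.depth ≤ ℓ ∧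
    ∀ x : Fin n → Bool,
      (f x = true → AWins k (fun t => T.eval (assemble n k x t))) ∧
      (f x = false → BWins k (fun t => T.eval (assemble n k x t)))

/-- Debate query complexity: the least verifier depth `ℓ` over all `(k,ℓ)`-debates for `f`. -/
noncomputable def DQC (n : ℕ) (f : (Fin n → Bool) → Bool) : ℕ :=
  sInf {ℓ | ∃ k, IsDebate n k ℓ f}

section Aux

/-- Relabel the variables of a decision tree. -/
def DT.relabel {m m' : ℕ} (g : Fin m → Fin m') : DT m → DT m'
  | .leaf b => .leaf b
  | .node i t0 t1 => .node (g i) (t0.relabel g) (t1.relabel g)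

lemma DT.relabel_eval {m m' : ℕ} (g : Fin m → Fin m') (T : DT m) (y : Fin m' → Bool) :
    (T.relabel g).eval y = T.eval (fun j => y (g j)) := by
  induction T with
  | leaf b => rfl
  | node i t0 t1 ih0 ih1 => simp [DT.relabel, DT.eval, ih0, ih1]

lemma DT.relabel_depth {m m' : ℕ} (g : Fin m → Fin m') (T : DT m) :
    (T.relabel g).depth = T.depth := by
  induction T with
  | leaf b => rfl
  | node i t0 t1 ih0 ih1 => simp [DT.relabel, DT.depth, ih0, ih1]

lemma DT.eval_congr {m : ℕ} (T : DT m) (y z : Fin m → Bool)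
    (h : ∀ j ∈ T.vars, y j = z j) : T.eval y = T.eval z := by
  induction T with
  | leaf b => rfl
  | node i t0 t1 ih0 ih1 =>
    have hi : y i = z i := h i (by simp [DT.vars])
    simp only [DT.eval, hi]
    rw [ih0 (fun j hj => h j (by simp [DT.vars, hj])),
        ih1 (fun j hj => h j (by simp [DT.vars, hj]))]

lemma DT.vars_card_le {m : ℕ} (T : DT m) : T.vars.card ≤ T.numNodes := by
  induction T with
  | leaf b => simp [DT.vars, DT.numNodes]
  | node i t0 t1 ih0 ih1 =>
    calc (insert i (t0.vars ∪ t1.vars)).card ≤ (t0.vars ∪ t1.vars).card + 1 :=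
          Finset.card_insert_le _ _
      _ ≤ t0.vars.card + t1.vars.card + 1 := by
          have := Finset.card_union_le t0.vars t1.vars; omega
      _ ≤ t0.numNodes + t1.numNodes + 1 := by omega

lemma DT.numNodes_lt {m : ℕ} (T : DT m) : T.numNodes + 1 ≤ 2 ^ T.depth := by
  induction T with
  | leaf b => simp [DT.numNodes, DT.depth]
  | node i t0 t1 ih0 ih1 =>
    have h0 : 2 ^ t0.depth ≤ 2 ^ max t0.depth t1.depth :=
      Nat.pow_le_pow_right (by norm_num) (le_max_left _ _)
    have h1 : 2 ^ t1.depth ≤ 2 ^ max t0.depth t1.depth :=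
      Nat.pow_le_pow_right (by norm_num) (le_max_right _ _)
    simp only [DT.numNodes, DT.depth, pow_succ]
    omega

/-- Insert two bits at round `i` of a transcript. -/
def insAt (i : ℕ) (a b : Bool) (t : List Bool) : List Bool :=
  t.take (2*i) ++ a :: b :: t.drop (2*i)

lemma insAt_zero (a b : Bool) (t : List Bool) : insAt 0 a b t = a :: b :: t := by
  simp [insAt]

lemma insAt_succ (i : ℕ) (a b c d : Bool) (t : List Bool) :
    insAt (i+1) a b (c :: d :: t) = c :: d :: insAt i a b t := by
  unfold insAt
  rw [show 2*(i+1) = (2*i) + 1 + 1 by ring]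
  simp

lemma getD_insAt (i : ℕ) (a b : Bool) (t : List Bool) (p : ℕ) (h : 2*i ≤ t.length) :
    (insAt i a b t).getD p false =
      if p < 2*i then t.getD p false
      else if p = 2*i then a
      else if p = 2*i+1 then b
      else t.getD (p-2) false := by
  have hlen : (t.take (2*i)).length = 2*i := by simp [List.length_take]; omega
  simp only [insAt, List.getD_eq_getElem?_getD]
  rcases lt_or_ge p (2*i) with hp | hp
  · rw [List.getElem?_append_left (by omega), if_pos hp, List.getElem?_take, if_pos hp]
  · rw [List.getElem?_append_right (by omega), if_neg (by omega), hlen]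
    by_cases h1 : p = 2*i
    · rw [if_pos h1, show p - 2*i = 0 by omega]
      simp
    · by_cases h2 : p = 2*i+1
      · rw [if_neg h1, if_pos h2, show p - 2*i = 1 by omega]
        simp
      · rw [if_neg h1, if_neg h2, show p - 2*i = (p - 2*i - 2) + 1 + 1 by omega]
        simp only [List.getElem?_cons_succ, List.getElem?_drop]
        rw [show 2*i + (p - 2*i - 2) = p - 2 by omega]

lemma AWins_congr : ∀ (k : ℕ) (V W : List Bool → Bool),
    (∀ t, t.length = 2*k → V t = W t) → AWins k V → AWins k W
  | 0, V, W, h, hA => by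
    simp only [AWins] at *
    rw [← h [] rfl]; exact hA
  | k+1, V, W, h, hA => by
    intro a
    obtain ⟨b, hb⟩ := hA a
    exact ⟨b, AWins_congr k _ _ (fun t ht => h (a::b::t) (by simp [ht]; ring)) hb⟩

lemma BWins_congr : ∀ (k : ℕ) (V W : List Bool → Bool),
    (∀ t, t.length = 2*k → V t = W t) → BWins k V → BWins k W
  | 0, V, W, h, hB => by
    simp only [BWins] at *
    rw [← h [] rfl]; exact hB
  | k+1, V, W, h, hB => by
    obtain ⟨a, ha⟩ := hB
    exact ⟨a, fun b => BWins_congr k _ _ (fun t ht => h (a::b::t) (by simp [ht]; ring)) (ha b)⟩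

lemma AWins_remove : ∀ (i k : ℕ), i ≤ k → ∀ (V : List Bool → Bool),
    (∀ t a b, t.length = 2*k → V (insAt i a b t) = V (insAt i false false t)) →
    AWins (k+1) V → AWins k (fun t => V (insAt i false false t))
  | 0, k, _, V, hind, hA => by
    obtain ⟨b, hb⟩ := hA false
    refine AWins_congr k _ _ (fun t ht => ?_) hb
    rw [← insAt_zero false b t, hind t false b ht, insAt_zero]
  | i+1, k, hik, V, hind, hA => by
    obtain ⟨k', rfl⟩ : ∃ k', k = k'+1 := ⟨k-1, by omega⟩
    intro a
    obtain ⟨b, hb⟩ := hA a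
    have := AWins_remove i k' (by omega) (fun t => V (a :: b :: t))
      (fun t a' b' ht => by
        show V (a :: b :: insAt i a' b' t) = V (a :: b :: insAt i false false t)
        rw [← insAt_succ, ← insAt_succ]
        exact hind (a::b::t) a' b' (by simp [ht]; ring)) hb
    refine ⟨b, AWins_congr k' _ _ (fun t ht => ?_) this⟩
    show V (a :: b :: insAt i false false t) = V (insAt (i+1) false false (a :: b :: t))
    rw [insAt_succ]

lemma BWins_remove : ∀ (i k : ℕ), i ≤ k → ∀ (V : List Bool → Bool),
    (∀ t a b, t.length = 2*k → V (insAt i a b t) = V (insAt i false false t)) →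
    BWins (k+1) V → BWins k (fun t => V (insAt i false false t))
  | 0, k, _, V, hind, hB => by
    obtain ⟨a, ha⟩ := hB
    refine BWins_congr k _ _ (fun t ht => ?_) (ha false)
    rw [← insAt_zero a false t, hind t a false ht, insAt_zero]
  | i+1, k, hik, V, hind, hB => by
    obtain ⟨k', rfl⟩ : ∃ k', k = k'+1 := ⟨k-1, by omega⟩
    obtain ⟨a, ha⟩ := hB
    refine ⟨a, fun b => ?_⟩
    have := BWins_remove i k' (by omega) (fun t => V (a :: b :: t))
      (fun t a' b' ht => by
        show V (a :: b :: insAt i a' b' t) = V (a :: b :: insAt i false false t)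
        rw [← insAt_succ, ← insAt_succ]
        exact hind (a::b::t) a' b' (by simp [ht]; ring)) (ha b)
    refine BWins_congr k' _ _ (fun t ht => ?_) this
    show V (a :: b :: insAt i false false t) = V (insAt (i+1) false false (a :: b :: t))
    rw [insAt_succ]

/-- The index remapping deleting round `i`. -/
def shrink (n k i : ℕ) (hpos : 0 < n + 2*k) (hik : i ≤ k) (j : Fin (n + 2*(k+1))) :
    Fin (n + 2*k) :=
  ⟨if (j : ℕ) < n + 2*i then (j : ℕ) else (j : ℕ) - 2, by
    have hj := j.isLt
    split <;> omega⟩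

lemma assemble_insAt (n k i : ℕ) (hpos : 0 < n + 2*k) (hik : i ≤ k)
    (x : Fin n → Bool) (t : List Bool) (ht : t.length = 2*k) (a b : Bool)
    (j : Fin (n + 2*(k+1))) (hj1 : (j : ℕ) ≠ n + 2*i) (hj2 : (j : ℕ) ≠ n + 2*i + 1) :
    assemble n (k+1) x (insAt i a b t) j = assemble n k x t (shrink n k i hpos hik j) := by
  have hgj : ((shrink n k i hpos hik j : Fin (n+2*k)) : ℕ)
      = if (j : ℕ) < n + 2*i then (j : ℕ) else (j : ℕ) - 2 := rfl
  rcases lt_or_ge (j : ℕ) n with hn | hn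
  · have hg : ((shrink n k i hpos hik j : Fin (n+2*k)) : ℕ) = (j : ℕ) := by
      rw [hgj, if_pos (by omega)]
    simp only [assemble, hg, dif_pos hn]
  · have h2i : 2*i ≤ t.length := by omega
    rcases lt_or_ge (j : ℕ) (n + 2*i) with hlt | hge
    · have hg : ((shrink n k i hpos hik j : Fin (n+2*k)) : ℕ) = (j : ℕ) := by
        rw [hgj, if_pos hlt]
      simp only [assemble, hg, dif_neg (by omega : ¬ (j:ℕ) < n)]
      rw [getD_insAt i a b t _ h2i, if_pos (by omega)]
    · have hg : ((shrink n k i hpos hik j : Fin (n+2*k)) : ℕ) = (j : ℕ) - 2 := by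
        rw [hgj, if_neg (by omega)]
      simp only [assemble, hg, dif_neg (by omega : ¬ (j:ℕ) < n),
        dif_neg (by omega : ¬ (j:ℕ) - 2 < n)]
      rw [getD_insAt i a b t _ h2i, if_neg (by omega), if_neg (by omega),
        if_neg (by omega)]
      congr 1
      omega

lemma remove_round (n k ℓ : ℕ) (f : (Fin n → Bool) → Bool)
    (T : DT (n + 2*(k+1))) (hd : T.depth ≤ ℓ)
    (hT : ∀ x : Fin n → Bool,
      (f x = true → AWins (k+1) (fun t => T.eval (assemble n (k+1) x t))) ∧
      (f x = false → BWins (k+1) (fun t => T.eval (assemble n (k+1) x t))))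
    (i : ℕ) (hik : i ≤ k) (hpos : 0 < n + 2*k)
    (hfree : ∀ j ∈ T.vars, (j : ℕ) ≠ n + 2*i ∧ (j : ℕ) ≠ n + 2*i + 1) :
    IsDebate n k ℓ f := by
  refine ⟨T.relabel (shrink n k i hpos hik), by rw [DT.relabel_depth]; exact hd, fun x => ?_⟩
  set V : List Bool → Bool := fun t => T.eval (assemble n (k+1) x t) with hV
  have hkey : ∀ t, t.length = 2*k → ∀ a b,
      V (insAt i a b t) = (T.relabel (shrink n k i hpos hik)).eval (assemble n k x t) := by
    intro t ht a b
    rw [DT.relabel_eval]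
    exact T.eval_congr _ _ (fun j hj =>
      assemble_insAt n k i hpos hik x t ht a b j (hfree j hj).1 (hfree j hj).2)
  have hind : ∀ t a b, t.length = 2*k → V (insAt i a b t) = V (insAt i false false t) := by
    intro t a b ht
    rw [hkey t ht a b, hkey t ht false false]
  constructor
  · intro hx
    exact AWins_congr k _ _ (fun t ht => hkey t ht false false)
      (AWins_remove i k hik V hind ((hT x).1 hx))
  · intro hx
    exact BWins_congr k _ _ (fun t ht => hkey t ht false false)
      (BWins_remove i k hik V hind ((hT x).2 hx))

end Aux

/-- If `f` has a `(k,ℓ)`-debate, then `f` has a `(k',ℓ)`-debate with `k' ≤ 2^ℓ`. -/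
theorem stmt_6 (n k ℓ : ℕ) (f : (Fin n → Bool) → Bool)
    (h : IsDebate n k ℓ f) :
    ∃ k' : ℕ, k' ≤ 2 ^ ℓ ∧ IsDebate n k' ℓ f := by
  revert h
  induction k using Nat.strong_induction_on with
  | _ k IH =>
    intro h
    by_cases hk : k ≤ 2 ^ ℓ
    · exact ⟨k, hk, h⟩
    · push_neg at hk
      obtain ⟨T, hd, hT⟩ := h
      have hk2 : 2 ≤ k := by
        have : 1 ≤ 2 ^ ℓ := Nat.one_le_two_pow
        omega
      obtain ⟨k', rfl⟩ : ∃ k', k = k' + 1 := ⟨k - 1, by omega⟩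
      have hcard : T.vars.card < k' + 1 := by
        have h1 := T.vars_card_le
        have h2 := T.numNodes_lt
        have h3 : 2 ^ T.depth ≤ 2 ^ ℓ := Nat.pow_le_pow_right (by norm_num) hd
        omega
      have hfree : ∃ i, i ≤ k' ∧ ∀ j ∈ T.vars, (j : ℕ) ≠ n + 2*i ∧ (j : ℕ) ≠ n + 2*i + 1 := by
        by_contra hcon
        push_neg at hcon
        have hc : ∀ i, ∃ j : Fin (n + 2*(k'+1)),
            i ≤ k' → (j ∈ T.vars ∧ ((j : ℕ) = n + 2*i ∨ (j : ℕ) = n + 2*i + 1)) := by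
          intro i
          by_cases hi : i ≤ k'
          · obtain ⟨j, hj, hjv⟩ := hcon i hi
            refine ⟨j, fun _ => ⟨hj, ?_⟩⟩
            by_cases h' : (j : ℕ) = n + 2*i
            · exact Or.inl h'
            · exact Or.inr (hjv h')
          · exact ⟨⟨0, by omega⟩, fun hi' => absurd hi' hi⟩
        choose F hF using hc
        have hinj : Set.InjOn F ↑(Finset.range (k'+1)) := by
          intro p hp q hq hpq
          simp only [Finset.coe_range, Set.mem_Iio] at hp hq
          have hFp := (hF p (by omega)).2
          have hFq := (hF q (by omega)).2
          rw [hpq] at hFp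
          omega
        have := Finset.card_le_card_of_injOn F
          (fun p hp => (hF p (by simp at hp; omega)).1) hinj
        simp only [Finset.card_range] at this
        omega
      obtain ⟨i, hik, hfr⟩ := hfree
      have hdeb : IsDebate n k' ℓ f :=
        remove_round n k' ℓ f T hd hT i hik (by omega) hfr
      exact IH k' (by omega) hdeb
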